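/- Let I and J be monomial ideals in S = K[x_1,…,x_n]. Then the polarization of their intersection equals the intersection of their polarizations: (I ∩ J)^p = I^p ∩ J^p (in a common polynomial ring extension T containing both polarizations). -/
import Mathlib


open MvPolynomial

/-- The monomial `x^a` in `K[x_i : i ∈ σ]`. -/
noncomputable def mono (K : Type*) [Field K] {σ : Type*} (a : σ →₀ ℕ) :
    MvPolynomial σ K :=
  MvPolynomial.monomial a 1

/-- An ideal is a monomial ideal if it is generated by monomials. -/
def IsMonomialIdeal {K : Type*} [Field K] {σ : Type*}
    (I : Ideal (MvPolynomial σ K)) : Prop :=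
  ∃ A : Set (σ →₀ ℕ), I = Ideal.span ((fun a => mono K a) '' A)

/-- The exponent vector of the polarization `u^p = ∏ᵢ ∏_{j<aᵢ} x_{ij}` of the
monomial `u = ∏ᵢ xᵢ^{aᵢ}`: the squarefree exponent supported on
`{(i,j) : j < a i}`, in the variables of `T = K[x_{ij}]`. -/
noncomputable def polarExp {n : ℕ} (a : Fin n →₀ ℕ) : (Fin n × ℕ) →₀ ℕ :=
  Finsupp.indicator
    (a.support.biUnion fun i => (Finset.range (a i)).image fun j => (i, j))
    (fun _ _ => 1)

/-- The polarization `I^p ⊂ T = K[x_{ij}]` of a monomial ideal `I ⊂ S`: the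
ideal generated by the polarizations of the monomials of `I` (for a monomial
ideal this is the ideal generated by the polarizations of any set of monomial
generators). -/
noncomputable def polarIdeal {K : Type*} [Field K] {n : ℕ}
    (I : Ideal (MvPolynomial (Fin n) K)) : Ideal (MvPolynomial (Fin n × ℕ) K) :=
  Ideal.span ((fun a => mono K (polarExp a)) '' {a : Fin n →₀ ℕ | mono K a ∈ I})

lemma polarExp_apply {n : ℕ} (a : Fin n →₀ ℕ) (x : Fin n × ℕ) :
    polarExp a x = if x.2 < a x.1 then 1 else 0 := by
  rcases x with ⟨i, j⟩
  unfold polarExp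
  by_cases h : j < a i
  · rw [Finsupp.indicator_of_mem, if_pos h]
    simp only [Finset.mem_biUnion, Finset.mem_image, Finset.mem_range,
      Finsupp.mem_support_iff]
    exact ⟨i, by omega, ⟨j, h, rfl⟩⟩
  · rw [Finsupp.indicator_of_notMem, if_neg h]
    simp only [Finset.mem_biUnion, Finset.mem_image, Finset.mem_range,
      Finsupp.mem_support_iff, not_exists, not_and]
    rintro i' _ j' hj' hij
    rw [Prod.mk.injEq] at hij
    obtain ⟨rfl, rfl⟩ := hij
    omega

lemma mem_polarIdeal {K : Type*} [Field K] {n : ℕ} (I : Ideal (MvPolynomial (Fin n) K))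
    (f : MvPolynomial (Fin n × ℕ) K) :
    f ∈ polarIdeal I ↔ ∀ c ∈ f.support, ∃ a, mono K a ∈ I ∧ polarExp a ≤ c := by
  rw [polarIdeal, show ((fun a => mono K (polarExp a)) '' {a | mono K a ∈ I}) =
      (fun e => monomial e (1 : K)) '' (polarExp '' {a | mono K a ∈ I}) by
      rw [Set.image_image]; rfl,
    mem_ideal_span_monomial_image]
  constructor
  · intro h c hc
    obtain ⟨e, ⟨a, ha, rfl⟩, he⟩ := h c hc
    exact ⟨a, ha, he⟩
  · intro h c hc
    obtain ⟨a, ha, hle⟩ := h c hc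
    exact ⟨polarExp a, ⟨a, ha, rfl⟩, hle⟩

lemma mono_mem_of_le {K : Type*} [Field K] {σ : Type*} {I : Ideal (MvPolynomial σ K)}
    {a b : σ →₀ ℕ} (ha : mono K a ∈ I) (hab : a ≤ b) : mono K b ∈ I := by
  have : mono K b = mono K (b - a) * mono K a := by
    simp only [mono, monomial_mul, mul_one, tsub_add_cancel_of_le hab]
  rw [this]
  exact Ideal.mul_mem_left _ _ ha

/-- Polarization commutes with intersections of monomial
ideals: `(I ∩ J)^p = I^p ∩ J^p`. -/
theorem polarIdeal_inf {K : Type*} [Field K] {n : ℕ}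
    (I J : Ideal (MvPolynomial (Fin n) K))
    (hI : IsMonomialIdeal I) (hJ : IsMonomialIdeal J) :
    polarIdeal (I ⊓ J) = polarIdeal I ⊓ polarIdeal J := by
  apply le_antisymm
  · apply le_inf <;>
    · apply Ideal.span_mono
      apply Set.image_mono
      intro a ha
      first
        | exact ha.1
        | exact ha.2
  · intro f hf
    rw [Submodule.mem_inf] at hf
    obtain ⟨hfI, hfJ⟩ := hf
    rw [mem_polarIdeal] at hfI hfJ ⊢
    intro c hc
    obtain ⟨a, haI, hpa⟩ := hfI c hc
    obtain ⟨b, hbJ, hpb⟩ := hfJ c hc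
    refine ⟨a ⊔ b, ⟨mono_mem_of_le haI le_sup_left, mono_mem_of_le hbJ le_sup_right⟩, ?_⟩
    intro x
    rw [polarExp_apply, Finsupp.sup_apply]
    split
    · next h =>
      rcases (by omega : x.2 < a x.1 ∨ x.2 < b x.1) with h' | h'
      · have := hpa x
        rwa [polarExp_apply, if_pos h'] at this
      · have := hpb x
        rwa [polarExp_apply, if_pos h'] at this
    · exact Nat.zero_le _
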